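/- Let V_j = X_0 + ⋯ + X_{j−1} be a random walk with i.i.d. real increments, M_k = max_{0 ≤ j ≤ k} V_j, and c > 0. Then P(V_k < −c, M_k ≤ 0) ≥ P(V_k < −c)/(k+1). -/

import Mathlib

open MeasureTheory ProbabilityTheory
open scoped ENNReal

private lemma joint_law_pi {Ω : Type*} [MeasurableSpace Ω] (μ : Measure Ω)
    [IsProbabilityMeasure μ]
    (X : ℕ → Ω → ℝ) (hmeas : ∀ n, Measurable (X n))
    (hindep : iIndepFun X μ)
    (hident : ∀ n, Measure.map (X n) μ = Measure.map (X 0) μ)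
    (k : ℕ) (g : Fin k → ℕ) (hg : Function.Injective g) :
    Measure.map (fun ω (r : Fin k) => X (g r) ω) μ
      = Measure.pi (fun _ : Fin k => Measure.map (X 0) μ) := by
  have hprob : IsProbabilityMeasure (Measure.map (X 0) μ) :=
    Measure.isProbabilityMeasure_map (hmeas 0).aemeasurable
  refine (Measure.pi_eq fun s hs => ?_).symm
  rw [Measure.map_apply (measurable_pi_lambda _ fun r => hmeas (g r))
    (MeasurableSet.univ_pi hs)]
  classical
  set sets : ℕ → Set ℝ := fun n => if h : ∃ r, g r = n then s h.choose else Set.univ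
    with hsets_def
  have hsets : ∀ r : Fin k, sets (g r) = s r := by
    intro r
    have h : ∃ r', g r' = g r := ⟨r, rfl⟩
    have hcr : h.choose = r := hg h.choose_spec
    simp [hsets_def, dif_pos h, hcr]
  have hpre : (fun ω (r : Fin k) => X (g r) ω) ⁻¹' (Set.pi Set.univ s)
      = ⋂ i ∈ Finset.image g Finset.univ, X i ⁻¹' sets i := by
    rw [Finset.set_biInter_finset_image]
    ext ω
    simp [Set.mem_pi, hsets]
  have hmble : ∀ i ∈ Finset.image g Finset.univ, MeasurableSet (sets i) := by
    intro i hi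
    obtain ⟨r, -, rfl⟩ := Finset.mem_image.mp hi
    rw [hsets]; exact hs r
  have key := hindep.measure_inter_preimage_eq_mul (Finset.image g Finset.univ) hmble
  rw [hpre, key, Finset.prod_image (fun a _ b _ h => hg h)]
  refine Finset.prod_congr rfl fun r _ => ?_
  rw [hsets, ← Measure.map_apply (hmeas (g r)) (hs r), hident (g r)]

/-- Let `V_j = X_0 + ⋯ + X_{j-1}` be a random walk with i.i.d. real
increments, `M_k = max_{0 ≤ j ≤ k} V_j` and `c > 0`.  Then
`P(V_k < -c, M_k ≤ 0) ≥ P(V_k < -c)/(k+1)`. -/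
theorem stmt_8 {Ω : Type*} [MeasurableSpace Ω] (μ : Measure Ω) [IsProbabilityMeasure μ]
    (X : ℕ → Ω → ℝ) (hmeas : ∀ n, Measurable (X n))
    (hindep : iIndepFun X μ)
    (hident : ∀ n, Measure.map (X n) μ = Measure.map (X 0) μ)
    (V : ℕ → Ω → ℝ) (hV : ∀ j ω, V j ω = ∑ r ∈ Finset.range j, X r ω)
    (k : ℕ) (c : ℝ) (hc : 0 < c) :
    μ {ω | V k ω < -c} / ((k : ℝ≥0∞) + 1)
      ≤ μ {ω | V k ω < -c ∧ ∀ j ≤ k, V j ω ≤ 0} := by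
  classical
  set ν := Measure.map (X 0) μ with hν
  have hprob : IsProbabilityMeasure ν :=
    Measure.isProbabilityMeasure_map (hmeas 0).aemeasurable
  -- partial sums of a vector in `Fin k → ℝ`
  set S : (Fin k → ℝ) → ℕ → ℝ :=
    fun x j => ∑ r ∈ Finset.range j, if h : r < k then x ⟨r, h⟩ else 0 with hS_def
  have hSm : ∀ j, Measurable fun x : Fin k → ℝ => S x j := by
    intro j
    apply Finset.measurable_sum
    intro r _
    by_cases h : r < k
    · simpa [h] using measurable_pi_apply (⟨r, h⟩ : Fin k)
    · simpa [h] using (measurable_const : Measurable fun _ : Fin k → ℝ => (0 : ℝ))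
  set G : Set (Fin k → ℝ) := {x | S x k < -c ∧ ∀ j ≤ k, S x j ≤ 0} with hG_def
  have hGm : MeasurableSet G := by
    have h1 : MeasurableSet {x : Fin k → ℝ | S x k < -c} :=
      measurableSet_lt (hSm k) measurable_const
    have h2 : MeasurableSet {x : Fin k → ℝ | ∀ j ≤ k, S x j ≤ 0} := by
      have h3 : {x : Fin k → ℝ | ∀ j ≤ k, S x j ≤ 0}
          = ⋂ j, ⋂ _ : j ≤ k, {x | S x j ≤ 0} := by
        ext x; simp
      rw [h3]
      exact MeasurableSet.iInter fun j => MeasurableSet.iInter fun _ =>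
        measurableSet_le (hSm j) measurable_const
    have h4 : G = {x : Fin k → ℝ | S x k < -c} ∩ {x | ∀ j ≤ k, S x j ≤ 0} := rfl
    rw [h4]; exact h1.inter h2
  set T := Measure.pi (fun _ : Fin k => ν) G with hT
  have hVsucc : ∀ n ω, V (n + 1) ω = V n ω + X n ω := by
    intro n ω; rw [hV, hV, Finset.sum_range_succ]
  have hV0 : ∀ ω, V 0 ω = 0 := by intro ω; rw [hV]; simp
  -- the rotated vectors
  set Y : ℕ → Ω → (Fin k → ℝ) := fun i ω r => X ((i + (r : ℕ)) % k) ω with hY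
  have hYm : ∀ i, Measurable (Y i) := fun i =>
    measurable_pi_lambda _ fun r => hmeas _
  have hYlaw : ∀ i, Measure.map (Y i) μ = Measure.pi (fun _ : Fin k => ν) := by
    intro i
    refine joint_law_pi μ X hmeas hindep hident k (fun r : Fin k => (i + (r : ℕ)) % k) ?_
    intro a b hab
    have h2 : (i + (a : ℕ)) ≡ (i + (b : ℕ)) [MOD k] := hab
    have h3 := Nat.ModEq.add_left_cancel' i h2
    exact Fin.ext (by rwa [Nat.ModEq, Nat.mod_eq_of_lt a.isLt, Nat.mod_eq_of_lt b.isLt] at h3)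
  -- the key partial-sum identity for rotated increments
  have hsum : ∀ i, i ≤ k → ∀ ω, ∀ j, j ≤ k →
      S (Y i ω) j = if i + j ≤ k then V (i + j) ω - V i ω
        else V k ω - V i ω + V (i + j - k) ω := by
    intro i hi ω j
    induction j with
    | zero =>
      intro _
      simp [hS_def, hi]
    | succ j ih =>
      intro hj
      have hjk : j < k := hj
      have ihh := ih hjk.le
      have hstep : S (Y i ω) (j + 1) = S (Y i ω) j + X ((i + j) % k) ω := by
        rw [hS_def]
        simp only []
        rw [Finset.sum_range_succ, dif_pos hjk]
      rw [hstep, ihh]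
      by_cases h1 : i + j < k
      · rw [Nat.mod_eq_of_lt h1, if_pos h1.le, if_pos (by omega : i + (j + 1) ≤ k)]
        have e : i + (j + 1) = (i + j) + 1 := by omega
        rw [e, hVsucc]; ring
      · push_neg at h1
        have hlt2 : i + j - k < k := by omega
        have hmod : (i + j) % k = i + j - k := by
          rw [Nat.mod_eq_sub_mod h1, Nat.mod_eq_of_lt hlt2]
        rw [hmod, if_neg (by omega : ¬ i + (j + 1) ≤ k)]
        by_cases h2 : i + j = k
        · rw [if_pos h2.le]
          have e1 : i + j - k = 0 := by omega
          have e2 : i + (j + 1) - k = 1 := by omega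
          have e3 : V 1 ω = X 0 ω := by rw [hV]; simp
          rw [e1, e2, h2, e3] <;> try ring
        · rw [if_neg (by omega : ¬ i + j ≤ k)]
          have e : i + (j + 1) - k = (i + j - k) + 1 := by omega
          rw [e, hVsucc]; ring
  -- each "argmax at i" event maps into G under the rotation by i
  have hsub : ∀ i, i ≤ k →
      {ω | V k ω < -c ∧ ∀ m ≤ k, V m ω ≤ V i ω} ⊆ Y i ⁻¹' G := by
    intro i hi ω hω
    obtain ⟨hlt, hmax⟩ := hω
    refine ⟨?_, ?_⟩
    · rw [hsum i hi ω k le_rfl]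
      by_cases h : i + k ≤ k
      · have hi0 : i = 0 := by omega
        subst hi0
        rw [if_pos h]
        simpa [hV0] using hlt
      · rw [if_neg h]
        have e : i + k - k = i := by omega
        rw [e]; linarith
    · intro j hj
      rw [hsum i hi ω j hj]
      split_ifs with h
      · have := hmax (i + j) h; linarith
      · have h1 : i + j - k ≤ k := by omega
        have := hmax (i + j - k) h1; linarith
  -- covering by argmax events
  have hcover : {ω | V k ω < -c} ⊆
      ⋃ i ∈ Finset.range (k + 1), {ω | V k ω < -c ∧ ∀ m ≤ k, V m ω ≤ V i ω} := by
    intro ω hω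
    obtain ⟨i, hi, hmax⟩ := Finset.exists_max_image (Finset.range (k + 1))
      (fun m => V m ω) ⟨0, Finset.mem_range.mpr (Nat.succ_pos k)⟩
    exact Set.mem_biUnion hi
      ⟨hω, fun m hm => hmax m (Finset.mem_range.mpr (by omega))⟩
  have hTi : ∀ i, i ≤ k → μ {ω | V k ω < -c ∧ ∀ m ≤ k, V m ω ≤ V i ω} ≤ T := by
    intro i hi
    calc μ {ω | V k ω < -c ∧ ∀ m ≤ k, V m ω ≤ V i ω}
        ≤ μ (Y i ⁻¹' G) := measure_mono (hsub i hi)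
      _ = T := by rw [← Measure.map_apply (hYm i) hGm, hYlaw i]
  have hmain : μ {ω | V k ω < -c} ≤ ((k : ℝ≥0∞) + 1) * T := by
    calc μ {ω | V k ω < -c}
        ≤ ∑ i ∈ Finset.range (k + 1),
            μ {ω | V k ω < -c ∧ ∀ m ≤ k, V m ω ≤ V i ω} :=
          (measure_mono hcover).trans (measure_biUnion_finset_le _ _)
      _ ≤ ∑ i ∈ Finset.range (k + 1), T :=
          Finset.sum_le_sum fun i hi =>
            hTi i (Nat.lt_succ_iff.mp (Finset.mem_range.mp hi))
      _ = ((k : ℝ≥0∞) + 1) * T := by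
          rw [Finset.sum_const, Finset.card_range, nsmul_eq_mul]
          push_cast
          ring
  -- identify the target event's measure with T
  have hid : Measure.map (fun ω (r : Fin k) => X (r : ℕ) ω) μ
      = Measure.pi (fun _ : Fin k => ν) :=
    joint_law_pi μ X hmeas hindep hident k (fun r => (r : ℕ)) Fin.val_injective
  have hSX : ∀ ω, ∀ j, j ≤ k → S (fun r : Fin k => X (r : ℕ) ω) j = V j ω := by
    intro ω j hj
    rw [hS_def, hV]
    refine Finset.sum_congr rfl fun r hr => ?_
    have hr' : r < k := lt_of_lt_of_le (Finset.mem_range.mp hr) hj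
    rw [dif_pos hr']
  have hRHS : {ω | V k ω < -c ∧ ∀ j ≤ k, V j ω ≤ 0}
      = (fun ω (r : Fin k) => X (r : ℕ) ω) ⁻¹' G := by
    ext ω
    simp only [Set.mem_setOf_eq, Set.mem_preimage, hG_def]
    constructor
    · rintro ⟨h1, h2⟩
      exact ⟨by rw [hSX ω k le_rfl]; exact h1,
        fun j hj => by rw [hSX ω j hj]; exact h2 j hj⟩
    · rintro ⟨h1, h2⟩
      exact ⟨by rwa [hSX ω k le_rfl] at h1,
        fun j hj => by rw [← hSX ω j hj]; exact h2 j hj⟩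
  have hRHSval : μ {ω | V k ω < -c ∧ ∀ j ≤ k, V j ω ≤ 0} = T := by
    have happ := Measure.map_apply (μ := μ) (f := fun ω (r : Fin k) => X (r : ℕ) ω)
      (measurable_pi_lambda _ fun r => hmeas (r : ℕ)) hGm
    rw [hRHS, ← happ, hid]
  rw [hRHSval]
  exact ENNReal.div_le_of_le_mul (hmain.trans_eq (mul_comm _ _))
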